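/- For x > 1, among the n with φ(n) ≤ x and φ(n) ∈ 𝒱^ℓ, the number of odd such n is at most the number of even such n; moreover, for every even n with φ(n) ∈ 𝒱^ℓ one has φ(2n) = 2φ(n) ∈ 𝒱^{ℓ+1}, and hence S^{ℓ+1}(2x) ≥ S^ℓ(x)/2. -/

import Mathlib

open Filter Topology
open scoped Classical

noncomputable section

/-- The multiplicity `A(m)`: the number of positive integers `n` with `φ(n) = m`. -/
def totA (m : ℕ) : ℕ := Set.ncard {n : ℕ | 0 < n ∧ n.totient = m}

/-- The set of totients `𝒱`. -/
def totV : Set ℕ := {m : ℕ | ∃ n : ℕ, 0 < n ∧ n.totient = m}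

/-- The stratum `𝒱^ℓ` of totients congruent to `2^ℓ` mod `2^(ℓ+1)`. -/
def totVl (ℓ : ℕ) : Set ℕ := {m ∈ totV | m % 2 ^ (ℓ + 1) = 2 ^ ℓ}

/-- `U(x)`: the number of elements of `U` not exceeding `x`. -/
def countUpTo (U : Set ℕ) (x : ℝ) : ℕ := Set.ncard {n ∈ U | (n : ℝ) ≤ x}

/-- `π(x)`: the number of primes not exceeding `x`. -/
def primePi (x : ℝ) : ℕ := Set.ncard {p : ℕ | p.Prime ∧ (p : ℝ) ≤ x}

/-- `S^ℓ(x) = Σ_{m ∈ 𝒱^ℓ, m ≤ x} A(m)`. -/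
def totS (ℓ : ℕ) (x : ℝ) : ℕ :=
  ∑ m ∈ Finset.range (⌊x⌋₊ + 1), if m ∈ totVl ℓ then totA m else 0

end


section Aux

lemma fiber_bound {n : ℕ} (hn : 0 < n) :
    n ≤ n.totient * (n.totient + 1) ^ (n.totient + 2) := by
  set m := n.totient with hm
  have hmpos : 0 < m := Nat.totient_pos.mpr hn
  have key := Nat.totient_mul_prod_primeFactors n
  have h1 : (1 : ℕ) ≤ ∏ p ∈ n.primeFactors, (p - 1) :=
    Finset.one_le_prod' fun p hp =>
      Nat.sub_pos_of_lt (Nat.prime_of_mem_primeFactors hp).one_lt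
  have hple : ∀ p ∈ n.primeFactors, p ≤ m + 1 := by
    intro p hp
    have hd : p - 1 ∣ m := by
      have := Nat.totient_dvd_of_dvd (Nat.dvd_of_mem_primeFactors hp)
      rwa [Nat.totient_prime (Nat.prime_of_mem_primeFactors hp)] at this
    have h2 := Nat.le_of_dvd hmpos hd
    have h3 := (Nat.prime_of_mem_primeFactors hp).one_lt
    omega
  have h2 : n ≤ m * ∏ p ∈ n.primeFactors, p := by
    calc n = n * 1 := (mul_one n).symm
      _ ≤ n * ∏ p ∈ n.primeFactors, (p - 1) := Nat.mul_le_mul_left n h1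
      _ = m * ∏ p ∈ n.primeFactors, p := key.symm
  have h3 : ∏ p ∈ n.primeFactors, p ≤ (m + 1) ^ n.primeFactors.card :=
    Finset.prod_le_pow_card _ _ _ hple
  have h4 : n.primeFactors.card ≤ m + 2 := by
    have hsub : n.primeFactors ⊆ Finset.range (m + 2) := fun p hp =>
      Finset.mem_range.mpr (by have := hple p hp; omega)
    simpa using Finset.card_le_card hsub
  calc n ≤ m * ∏ p ∈ n.primeFactors, p := h2
    _ ≤ m * (m + 1) ^ n.primeFactors.card := Nat.mul_le_mul_left m h3
    _ ≤ m * (m + 1) ^ (m + 2) :=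
      Nat.mul_le_mul_left m (Nat.pow_le_pow_right (by omega) h4)

lemma fiber_finite (m : ℕ) : {n : ℕ | 0 < n ∧ n.totient = m}.Finite := by
  apply Set.Finite.subset (Set.finite_Iic (m * (m + 1) ^ (m + 2)))
  rintro n ⟨hn, rfl⟩
  exact fiber_bound hn

/-- The set of positive `n` with `φ(n) ≤ x` and `φ(n) ∈ 𝒱^ℓ`. -/
def Nsetx (ℓ : ℕ) (x : ℝ) : Set ℕ :=
  {n : ℕ | 0 < n ∧ (n.totient : ℝ) ≤ x ∧ n.totient ∈ totVl ℓ}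

lemma Nset_finite (ℓ : ℕ) (x : ℝ) : (Nsetx ℓ x).Finite := by
  apply Set.Finite.subset
    (Set.Finite.biUnion (Set.finite_Iic ⌊x⌋₊) fun m _ => fiber_finite m)
  rintro n ⟨hn, hle, -⟩
  exact Set.mem_biUnion (Nat.le_floor hle) ⟨hn, rfl⟩

lemma totS_eq (ℓ : ℕ) {x : ℝ} (hx : 0 ≤ x) : totS ℓ x = (Nsetx ℓ x).ncard := by
  classical
  set T : Finset ℕ := (Finset.range (⌊x⌋₊ + 1)).filter (· ∈ totVl ℓ) with hT
  have hset : Nsetx ℓ x = ↑(T.biUnion fun m => (fiber_finite m).toFinset) := by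
    ext n
    simp only [Nsetx, Set.mem_setOf_eq, Finset.coe_biUnion, Set.mem_iUnion, Finset.mem_coe,
      Finset.mem_biUnion, hT, Finset.mem_filter, Finset.mem_range, Set.Finite.mem_toFinset]
    constructor
    · rintro ⟨hn, hle, hv⟩
      exact ⟨n.totient, ⟨Nat.lt_succ_of_le (Nat.le_floor hle), hv⟩, hn, rfl⟩
    · rintro ⟨m, ⟨hm1, hm2⟩, hn, rfl⟩
      exact ⟨hn, (Nat.le_floor_iff hx).mp (Nat.lt_succ_iff.mp hm1), hm2⟩
  rw [hset, Set.ncard_coe_finset, Finset.card_biUnion]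
  · rw [totS, hT, Finset.sum_filter]
    refine Finset.sum_congr rfl fun m _ => ?_
    split
    · exact Set.ncard_eq_toFinset_card _ (fiber_finite m)
    · rfl
  · intro a _ b _ hab
    rw [Function.onFun, Finset.disjoint_left]
    rintro n hna hnb
    rw [Set.Finite.mem_toFinset] at hna hnb
    exact hab (hna.2 ▸ hnb.2)

end Aux

/-- For `x > 1`, among `n` with `φ(n) ≤ x` and `φ(n) ∈ 𝒱^ℓ`, the odd ones are at
most as many as the even ones; every even such `n` satisfies `φ(2n) = 2φ(n) ∈ 𝒱^{ℓ+1}`; and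
hence `S^{ℓ+1}(2x) ≥ S^ℓ(x)/2`. -/
theorem stmt_16 (x : ℝ) (hx : 1 < x) (ℓ : ℕ) (hℓ : 1 ≤ ℓ) :
    (Set.ncard {n : ℕ | 0 < n ∧ Odd n ∧ (n.totient : ℝ) ≤ x ∧ n.totient ∈ totVl ℓ} ≤
      Set.ncard {n : ℕ | 0 < n ∧ Even n ∧ (n.totient : ℝ) ≤ x ∧ n.totient ∈ totVl ℓ}) ∧
    (∀ n : ℕ, 0 < n → Even n → n.totient ∈ totVl ℓ →
      (2 * n).totient = 2 * n.totient ∧ 2 * n.totient ∈ totVl (ℓ + 1)) ∧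
    (totS ℓ x : ℝ) / 2 ≤ (totS (ℓ + 1) (2 * x) : ℝ) := by
  have hx0 : (0 : ℝ) ≤ x := le_of_lt (lt_trans one_pos hx)
  set O := {n : ℕ | 0 < n ∧ Odd n ∧ (n.totient : ℝ) ≤ x ∧ n.totient ∈ totVl ℓ} with hO
  set E := {n : ℕ | 0 < n ∧ Even n ∧ (n.totient : ℝ) ≤ x ∧ n.totient ∈ totVl ℓ} with hE
  have hEfin : E.Finite := (Nset_finite ℓ x).subset (by
    rintro n ⟨h1, -, h3, h4⟩; exact ⟨h1, h3, h4⟩)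
  have hOfin : O.Finite := (Nset_finite ℓ x).subset (by
    rintro n ⟨h1, -, h3, h4⟩; exact ⟨h1, h3, h4⟩)
  have part1 : O.ncard ≤ E.ncard := by
    apply Set.ncard_le_ncard_of_injOn (fun n => 2 * n) ?_ ?_ hEfin
    · rintro n ⟨hn, hodd, hle, hv⟩
      have hphi : (2 * n).totient = n.totient := by
        rw [Nat.totient_mul (Nat.coprime_two_left.mpr hodd), Nat.totient_two, one_mul]
      exact ⟨by positivity, ⟨n, two_mul n⟩, by rw [hphi]; exact hle, by rw [hphi]; exact hv⟩
    · exact fun a _ b _ h => Nat.eq_of_mul_eq_mul_left two_pos h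
  have part2 : ∀ n : ℕ, 0 < n → Even n → n.totient ∈ totVl ℓ →
      (2 * n).totient = 2 * n.totient ∧ 2 * n.totient ∈ totVl (ℓ + 1) := by
    intro n hn he hv
    have h2 : (2 * n).totient = 2 * n.totient :=
      Nat.totient_mul_of_prime_of_dvd Nat.prime_two (even_iff_two_dvd.mp he)
    obtain ⟨-, hmod⟩ := hv
    refine ⟨h2, ⟨2 * n, by positivity, h2⟩, ?_⟩
    calc 2 * n.totient % 2 ^ (ℓ + 1 + 1) = 2 * n.totient % (2 * 2 ^ (ℓ + 1)) := by
          rw [pow_succ']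
      _ = 2 * (n.totient % 2 ^ (ℓ + 1)) := Nat.mul_mod_mul_left _ _ _
      _ = 2 * 2 ^ ℓ := by rw [hmod]
      _ = 2 ^ (ℓ + 1) := (pow_succ' 2 ℓ).symm
  have hNO : Nsetx ℓ x = O ∪ E := by
    ext n
    constructor
    · rintro ⟨hn, hle, hv⟩
      rcases Nat.even_or_odd n with he | ho
      · exact Or.inr ⟨hn, he, hle, hv⟩
      · exact Or.inl ⟨hn, ho, hle, hv⟩
    · rintro (⟨hn, -, hle, hv⟩ | ⟨hn, -, hle, hv⟩) <;> exact ⟨hn, hle, hv⟩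
  have hdisj : Disjoint O E := Set.disjoint_left.mpr (by
    rintro n ⟨-, ho, -, -⟩ ⟨-, he, -, -⟩
    exact (Nat.not_even_iff_odd.mpr ho) he)
  have hE_le : E.ncard ≤ (Nsetx (ℓ + 1) (2 * x)).ncard := by
    apply Set.ncard_le_ncard_of_injOn (fun n => 2 * n) ?_ ?_ (Nset_finite _ _)
    · rintro n ⟨hn, he, hle, hv⟩
      obtain ⟨h2, hv2⟩ := part2 n hn he hv
      refine ⟨by positivity, ?_, by rw [h2]; exact hv2⟩
      rw [h2]; push_cast; linarith
    · exact fun a _ b _ h => Nat.eq_of_mul_eq_mul_left two_pos h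
  have e1 : totS ℓ x = O.ncard + E.ncard := by
    rw [totS_eq ℓ hx0, hNO, Set.ncard_union_eq hdisj hOfin hEfin]
  have e2 : totS (ℓ + 1) (2 * x) = (Nsetx (ℓ + 1) (2 * x)).ncard :=
    totS_eq _ (by linarith)
  refine ⟨part1, part2, ?_⟩
  have hnat : totS ℓ x ≤ 2 * totS (ℓ + 1) (2 * x) := by
    rw [e1, e2]; omega
  rw [div_le_iff₀ (by norm_num : (0 : ℝ) < 2)]
  calc (totS ℓ x : ℝ) ≤ ((2 * totS (ℓ + 1) (2 * x) : ℕ) : ℝ) := by exact_mod_cast hnat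
    _ = (totS (ℓ + 1) (2 * x) : ℝ) * 2 := by push_cast; ring
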